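/- Let Ω be a commutative monoid acting on the vertex decoration set V, and define σ ▷^{a,ω} τ := Σ_{v ∈ N_τ} ↑_v^ω (σ ▷ᵃ_v τ), where ↑_v^ω multiplies the decoration of v by ω. Then the family (▷^{a,ω})_{(a,ω) ∈ E×Ω} makes the span of decorated rooted trees an (E×Ω)-multi-pre-Lie algebra. -/

import Mathlib

/-- Planar rooted trees with vertex decorations in `V` and edge decorations in `E`. -/
inductive RT (V E : Type) : Type where
  | node : V → List (E × RT V E) → RT V E

/-- One-step reordering of children (at the root or at a deeper vertex). -/
inductive Swap {V E : Type} : RT V E → RT V E → Prop where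
  | here (v : V) (l₁ l₂ : List (E × RT V E)) (p q : E × RT V E) :
      Swap (.node v (l₁ ++ p :: q :: l₂)) (.node v (l₁ ++ q :: p :: l₂))
  | child (v : V) (l₁ l₂ : List (E × RT V E)) (e : E) {t t' : RT V E} :
      Swap t t' → Swap (.node v (l₁ ++ (e, t) :: l₂)) (.node v (l₁ ++ (e, t') :: l₂))

/-- (Non-planar) decorated rooted trees: planar trees modulo reordering of children. -/
def QT (V E : Type) : Type := Quot (@Swap V E)

/-- The linear span of decorated rooted trees, with rational coefficients. -/
abbrev Span (V E : Type) : Type := QT V E →₀ ℚ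

def qt {V E : Type} (t : RT V E) : QT V E := Quot.mk _ t

/-- A tree, as a basis vector of the span. -/
noncomputable def bas {V E : Type} (t : RT V E) : Span V E := Finsupp.single (qt t) 1

/-- The element of the span given by a list of trees (sum with multiplicity). -/
noncomputable def ofList {V E : Type} (l : List (RT V E)) : Span V E := (l.map bas).sum

/-- Formal rational combination of planar trees, as an element of the span. -/
noncomputable def combo {V E : Type} (l : List (ℚ × RT V E)) : Span V E :=
  (l.map fun p => p.1 • bas p.2).sum

mutual
/-- List of the graftings of `σ` on each vertex of a tree, via a new `a`-edge. -/
def graftT {V E : Type} (a : E) (σ : RT V E) : RT V E → List (RT V E)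
  | .node v l => .node v ((a, σ) :: l) :: (graftL a σ l).map (.node v)
/-- Auxiliary: graftings of `σ` inside one of the listed subtrees. -/
def graftL {V E : Type} (a : E) (σ : RT V E) :
    List (E × RT V E) → List (List (E × RT V E))
  | [] => []
  | (e, t) :: r =>
      ((graftT a σ t).map fun t' => (e, t') :: r)
        ++ ((graftL a σ r).map fun r' => (e, t) :: r')
end

mutual
/-- Graftings of `σ` on each vertex of a tree via a new `a`-edge, additionally acting by
`act ω` on the decoration of the target vertex: the summands of `σ ▷^{a,ω} τ`. -/
def graftMT {V E Ω : Type} (act : Ω → V → V) (a : E) (ω : Ω) (σ : RT V E) :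
    RT V E → List (RT V E)
  | .node v l => .node (act ω v) ((a, σ) :: l) :: (graftML act a ω σ l).map (.node v)
/-- Auxiliary: graftings of `σ` inside one of the listed subtrees. -/
def graftML {V E Ω : Type} (act : Ω → V → V) (a : E) (ω : Ω) (σ : RT V E) :
    List (E × RT V E) → List (List (E × RT V E))
  | [] => []
  | (e, t) :: r =>
      ((graftMT act a ω σ t).map fun t' => (e, t') :: r)
        ++ ((graftML act a ω σ r).map fun r' => (e, t) :: r')
end

section Aux

variable {V E Ω : Type}

lemma map_congr_of_map_eq {α β γ : Type*} {f : α → β} {g : α → γ}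
    {s t : Multiset α} (hst : s.map f = t.map f)
    (h : ∀ x y, f x = f y → g x = g y) : s.map g = t.map g := by
  rw [← Multiset.rel_eq] at hst ⊢
  rw [Multiset.rel_map] at hst ⊢
  exact hst.mono fun a _ b _ hab => h a b hab

def ctxQ (v : V) (c r : List (E × RT V E)) (e : E) : QT V E → QT V E :=
  Quot.lift (fun t => qt (RT.node v (c ++ (e, t) :: r)))
    (fun _ _ h => Quot.sound (Swap.child v c r e h))

lemma qt_node_congr_child {t t' : RT V E} (h : qt t = qt t') (v : V)
    (c r : List (E × RT V E)) (e : E) :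
    qt (RT.node v (c ++ (e, t) :: r)) = qt (RT.node v (c ++ (e, t') :: r)) :=
  congrArg (ctxQ v c r e) h

lemma qt_node_perm {l₁ l₂ : List (E × RT V E)} (h : l₁.Perm l₂) :
    ∀ (v : V) (c : List (E × RT V E)),
      qt (RT.node v (c ++ l₁)) = qt (RT.node v (c ++ l₂)) := by
  induction h with
  | nil => intro v c; rfl
  | cons p _ ih =>
      intro v c
      have := ih v (c ++ [p])
      simpa [List.append_assoc] using this
  | swap x y l => intro v c; exact Quot.sound (Swap.here v c l y x)
  | trans _ _ ih₁ ih₂ => intro v c; exact (ih₁ v c).trans (ih₂ v c)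

def cls (l : List (E × RT V E)) : Multiset (E × QT V E) :=
  (l : Multiset (E × RT V E)).map fun p => (p.1, qt p.2)

lemma cls_nil : cls ([] : List (E × RT V E)) = 0 := rfl

lemma cls_cons (p : E × RT V E) (l : List (E × RT V E)) :
    cls (p :: l) = (p.1, qt p.2) ::ₘ cls l := by
  simp [cls, ← Multiset.cons_coe]

lemma cls_append (l₁ l₂ : List (E × RT V E)) :
    cls (l₁ ++ l₂) = cls l₁ + cls l₂ := by
  simp [cls, ← Multiset.coe_add]

lemma qt_node_of_cls_aux : ∀ (n : ℕ) (l₁ l₂ : List (E × RT V E)), l₁.length ≤ n →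
    cls l₁ = cls l₂ → ∀ (v : V) (c : List (E × RT V E)),
    qt (RT.node v (c ++ l₁)) = qt (RT.node v (c ++ l₂)) := by
  intro n
  induction n with
  | zero =>
      intro l₁ l₂ hlen h v c
      match l₁, hlen with
      | [], _ =>
          have : l₂ = [] := by
            have h0 : (0 : Multiset (E × QT V E)) = cls l₂ := h
            rw [cls] at h0
            have := Multiset.map_eq_zero.mp h0.symm
            exact_mod_cast (Multiset.coe_eq_zero l₂).mp this
          rw [this]
  | succ n ih =>
      intro l₁ l₂ hlen h v c
      match l₁, hlen with
      | [], _ =>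
          have : l₂ = [] := by
            have h0 : (0 : Multiset (E × QT V E)) = cls l₂ := h
            rw [cls] at h0
            have := Multiset.map_eq_zero.mp h0.symm
            exact_mod_cast (Multiset.coe_eq_zero l₂).mp this
          rw [this]
      | (e, t) :: r, hlen =>
          have hmem : ((e, qt t) : E × QT V E) ∈ cls l₂ := by
            rw [← h, cls_cons]; exact Multiset.mem_cons_self _ _
          rw [cls] at hmem
          obtain ⟨p, hp, hpe⟩ := Multiset.mem_map.mp hmem
          obtain ⟨t', rfl⟩ : ∃ t', p = (e, t') := by
            refine ⟨p.2, ?_⟩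
            have : p.1 = e := congrArg Prod.fst hpe
            cases p; simp_all
          have hqt : qt t' = qt t := congrArg Prod.snd hpe
          have hp' : (e, t') ∈ l₂ := by exact_mod_cast hp
          obtain ⟨s, u, rfl⟩ := List.append_of_mem hp'
          -- cls r = cls (s ++ u)
          have hru : cls r = cls (s ++ u) := by
            rw [cls_cons, cls_append, cls_cons] at h
            have h2 : ((e, qt t) ::ₘ cls r) = (e, qt t) ::ₘ (cls s + cls u) := by
              rw [h, hqt]
              rw [← Multiset.singleton_add, ← Multiset.singleton_add]
              rw [add_left_comm]
            rw [cls_append]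
            exact (Multiset.cons_inj_right _).mp h2
          have hlen' : r.length ≤ n := by simpa using hlen
          calc qt (RT.node v (c ++ (e, t) :: r))
              = qt (RT.node v (c ++ (e, t') :: r)) :=
                qt_node_congr_child hqt.symm v c r e
            _ = qt (RT.node v ((c ++ [(e, t')]) ++ r)) := by
                rw [List.append_assoc]; rfl
            _ = qt (RT.node v ((c ++ [(e, t')]) ++ (s ++ u))) :=
                ih r (s ++ u) hlen' hru v (c ++ [(e, t')])
            _ = qt (RT.node v (c ++ (e, t') :: (s ++ u))) := by
                rw [List.append_assoc]; rfl
            _ = qt (RT.node v (c ++ (s ++ (e, t') :: u))) :=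
                qt_node_perm (List.perm_middle.symm) v c

lemma qt_node_of_cls {l₁ l₂ : List (E × RT V E)} (h : cls l₁ = cls l₂)
    (v : V) (c : List (E × RT V E)) :
    qt (RT.node v (c ++ l₁)) = qt (RT.node v (c ++ l₂)) :=
  qt_node_of_cls_aux l₁.length l₁ l₂ le_rfl h v c

lemma bind_map_comm {α β γ : Type*} (m : Multiset α) (n : Multiset β) (f : α → β → γ) :
    (m.bind fun x => n.map (f x)) = n.bind fun y => m.map fun x => f x y := by
  calc (m.bind fun x => n.map (f x)) = m.bind (fun x => n.bind fun y => {f x y}) := by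
        simp [Multiset.bind_singleton]
    _ = n.bind (fun y => m.bind fun x => {f x y}) := Multiset.bind_bind m n
    _ = n.bind (fun y => m.map fun x => f x y) := by simp [Multiset.bind_singleton]

end Aux

section Main

variable {V E Ω : Type}

def mT (act : Ω → V → V) (a : E) (ω : Ω) (σ t : RT V E) : Multiset (RT V E) :=
  (graftMT act a ω σ t : List (RT V E))

def mL (act : Ω → V → V) (a : E) (ω : Ω) (σ : RT V E) (l : List (E × RT V E)) :
    Multiset (List (E × RT V E)) :=
  (graftML act a ω σ l : List (List (E × RT V E)))

lemma mT_node (act : Ω → V → V) (a : E) (ω : Ω) (σ : RT V E) (v : V)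
    (l : List (E × RT V E)) :
    mT act a ω σ (.node v l)
      = RT.node (act ω v) ((a, σ) :: l) ::ₘ (mL act a ω σ l).map (RT.node v) := by
  simp [mT, mL, graftMT, Multiset.map_coe, Multiset.cons_coe]

lemma mL_nil (act : Ω → V → V) (a : E) (ω : Ω) (σ : RT V E) : mL act a ω σ [] = 0 := rfl

lemma mL_cons (act : Ω → V → V) (a : E) (ω : Ω) (σ : RT V E) (e : E) (t : RT V E)
    (r : List (E × RT V E)) :
    mL act a ω σ ((e, t) :: r)
      = (mT act a ω σ t).map (fun t' => (e, t') :: r)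
        + (mL act a ω σ r).map (fun r' => (e, t) :: r') := by
  simp [mT, mL, graftML, Multiset.map_coe, ← Multiset.coe_add]

mutual
theorem mainT (act : Ω → V → V) (hc : ∀ ω μ v, act ω (act μ v) = act μ (act ω v))
    (a b : E) (ω μ : Ω) (σ τ : RT V E) :
    ∀ υ : RT V E,
    ((mT act b μ τ υ).bind (mT act a ω σ)
      + (mT act b μ τ σ).bind (fun ρ => mT act a ω ρ υ)).map qt
    = ((mT act a ω σ υ).bind (mT act b μ τ)
      + (mT act a ω σ τ).bind (fun ρ => mT act b μ ρ υ)).map qt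
  | .node v l => by
    have IH := mainL act hc a b ω μ σ τ l
    have IH' :
        ((mL act b μ τ l).bind (mL act a ω σ)
          + (mT act b μ τ σ).bind (fun ρ => mL act a ω ρ l)).map
            (fun l' => qt (RT.node v l'))
        = ((mL act a ω σ l).bind (mL act b μ τ)
          + (mT act a ω σ τ).bind (fun ρ => mL act b μ ρ l)).map
            (fun l' => qt (RT.node v l')) :=
      map_congr_of_map_eq IH (fun x y h => qt_node_of_cls h v [])
    have hhead : qt (RT.node (act ω (act μ v)) ((a, σ) :: (b, τ) :: l))
        = qt (RT.node (act μ (act ω v)) ((b, τ) :: (a, σ) :: l)) := by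
      rw [hc]
      exact Quot.sound (Swap.here (act μ (act ω v)) [] l (a, σ) (b, τ))
    simp only [mT_node, mL_cons, Multiset.cons_bind, Multiset.bind_map, Multiset.map_bind,
      Multiset.add_bind, Multiset.bind_add, Multiset.bind_cons, Multiset.map_add,
      Multiset.map_cons, Multiset.map_map, Function.comp] at IH' ⊢
    rw [hhead]
    classical
    rw [Multiset.ext]
    intro x
    have IHc := congrArg (Multiset.count x) IH'
    simp only [Multiset.count_add, Multiset.count_cons] at IHc ⊢
    omega
theorem mainL (act : Ω → V → V) (hc : ∀ ω μ v, act ω (act μ v) = act μ (act ω v))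
    (a b : E) (ω μ : Ω) (σ τ : RT V E) :
    ∀ l : List (E × RT V E),
    ((mL act b μ τ l).bind (mL act a ω σ)
      + (mT act b μ τ σ).bind (fun ρ => mL act a ω ρ l)).map cls
    = ((mL act a ω σ l).bind (mL act b μ τ)
      + (mT act a ω σ τ).bind (fun ρ => mL act b μ ρ l)).map cls
  | [] => by
      simp [mL_nil, Multiset.zero_bind, Multiset.bind_zero]
  | (e, t) :: r => by
    have IHt := mainT act hc a b ω μ σ τ t
    have IHr := mainL act hc a b ω μ σ τ r
    have IHt' := map_congr_of_map_eq (g := fun t'' => cls ((e, t'') :: r)) IHt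
      (fun x y h => by simp [cls_cons, h])
    have IHr' := map_congr_of_map_eq (g := fun r'' => cls ((e, t) :: r'')) IHr
      (fun x y h => by simp [cls_cons, h])
    simp only [mL_cons, Multiset.bind_map, Multiset.map_bind, Multiset.add_bind,
      Multiset.bind_add, Multiset.map_add, Multiset.map_map, Function.comp] at IHt' IHr' ⊢
    rw [bind_map_comm (mT act b μ τ t) (mL act a ω σ r) (fun t' r' => cls ((e, t') :: r')),
        bind_map_comm (mT act a ω σ t) (mL act b μ τ r) (fun t' r' => cls ((e, t') :: r'))]
    classical
    rw [Multiset.ext]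
    intro x
    have h1 := congrArg (Multiset.count x) IHt'
    have h2 := congrArg (Multiset.count x) IHr'
    simp only [Multiset.count_add] at h1 h2 ⊢
    omega
end

end Main

section Bridge

variable {V E Ω : Type}

noncomputable def sumQ (m : Multiset (RT V E)) : Span V E := (m.map bas).sum

lemma sumQ_coe (l : List (RT V E)) : ofList l = sumQ (l : Multiset (RT V E)) := by
  simp [ofList, sumQ, Multiset.map_coe, Multiset.sum_coe]

lemma sumQ_congr {m m' : Multiset (RT V E)} (h : m.map qt = m'.map qt) :
    sumQ m = sumQ m' := by
  have key : ∀ s : Multiset (RT V E),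
      s.map bas = (s.map qt).map (fun x => Finsupp.single x (1 : ℚ)) := by
    intro s; rw [Multiset.map_map]; rfl
  rw [sumQ, sumQ, key, key, h]

lemma sumQ_add (m m' : Multiset (RT V E)) : sumQ (m + m') = sumQ m + sumQ m' := by
  simp [sumQ, Multiset.map_add]

end Bridge

/-- **The products `▷^{a,ω}` form an `(E × Ω)`-multi-pre-Lie structure.**  Let `Ω` be a
commutative monoid acting on the vertex decoration set `V` and let
`σ ▷^{a,ω} τ := Σ_{v∈N_τ} ↑_v^ω (σ ▷ᵃ_v τ)` (graft at `v` with an `a`-edge and multiply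
the decoration of `v` by `ω`).  Then the bilinear extensions `g (a, ω)` of these products
to the span of decorated rooted trees satisfy the `(E × Ω)`-multi-pre-Lie identity. -/
theorem graftAction_multiPreLie {V E Ω : Type} [CommMonoid Ω] [MulAction Ω V]
    (g : E × Ω → Span V E →ₗ[ℚ] Span V E →ₗ[ℚ] Span V E)
    (hg : ∀ (a : E) (ω : Ω) (σ τ : RT V E),
      g (a, ω) (bas σ) (bas τ) = ofList (graftMT (fun ω v => ω • v) a ω σ τ)) :
    ∀ (p q : E × Ω) (x y z : Span V E),
      g p x (g q y z) - g q (g p x y) z = g q y (g p x z) - g p (g q y x) z := by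
  intro p q x y z
  obtain ⟨a, ω⟩ := p
  obtain ⟨b, μ⟩ := q
  set act : Ω → V → V := fun ω v => ω • v with hact
  have hc : ∀ ω μ v, act ω (act μ v) = act μ (act ω v) := by
    intro ω μ v
    simp only [hact, smul_smul, mul_comm]
  -- the right-slot expansion
  have habs : ∀ (a : E) (ω : Ω) (σ : RT V E) (m : Multiset (RT V E)),
      g (a, ω) (bas σ) (sumQ m) = sumQ (m.bind (mT act a ω σ)) := by
    intro a ω σ m
    induction m using Multiset.induction with
    | empty => simp [sumQ]
    | cons t s ih =>
        rw [Multiset.cons_bind, sumQ_add, ← ih]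
        have : sumQ (t ::ₘ s) = bas t + sumQ s := by
          simp [sumQ, Multiset.map_cons, Multiset.sum_cons]
        rw [this, map_add, hg, sumQ_coe, mT]
  -- the left-slot expansion
  have habs' : ∀ (a : E) (ω : Ω) (υ : RT V E) (m : Multiset (RT V E)),
      g (a, ω) (sumQ m) (bas υ) = sumQ (m.bind (fun ρ => mT act a ω ρ υ)) := by
    intro a ω υ m
    induction m using Multiset.induction with
    | empty => simp [sumQ]
    | cons t s ih =>
        rw [Multiset.cons_bind, sumQ_add, ← ih]
        have : sumQ (t ::ₘ s) = bas t + sumQ s := by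
          simp [sumQ, Multiset.map_cons, Multiset.sum_cons]
        rw [this, map_add, LinearMap.add_apply, hg, sumQ_coe, mT]
  -- identity on basis trees, in additive form
  have key : ∀ σ τ υ : RT V E,
      g (a, ω) (bas σ) (g (b, μ) (bas τ) (bas υ)) + g (a, ω) (g (b, μ) (bas τ) (bas σ)) (bas υ)
      = g (b, μ) (bas τ) (g (a, ω) (bas σ) (bas υ))
        + g (b, μ) (g (a, ω) (bas σ) (bas τ)) (bas υ) := by
    intro σ τ υ
    rw [hg b μ τ υ, sumQ_coe, habs, hg b μ τ σ, sumQ_coe, habs',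
        hg a ω σ υ, sumQ_coe, habs, hg a ω σ τ, sumQ_coe, habs',
        ← sumQ_add, ← sumQ_add]
    refine sumQ_congr ?_
    have hm := mainT act hc a b ω μ σ τ υ
    simp only [Multiset.map_add] at hm
    rw [Multiset.map_add, Multiset.map_add]
    exact hm
  -- extend to general z
  have key1 : ∀ (σ τ : RT V E) (z : Span V E),
      g (a, ω) (bas σ) (g (b, μ) (bas τ) z) + g (a, ω) (g (b, μ) (bas τ) (bas σ)) z
      = g (b, μ) (bas τ) (g (a, ω) (bas σ) z)
        + g (b, μ) (g (a, ω) (bas σ) (bas τ)) z := by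
    intro σ τ z
    induction z using Finsupp.induction_linear with
    | zero => simp
    | add f h hf hh =>
        simp only [map_add]
        linear_combination (norm := abel) hf + hh
    | single c r =>
        obtain ⟨t, rfl⟩ := Quot.exists_rep c
        have hb : (Finsupp.single (Quot.mk Swap t) r : Span V E) = r • bas t := by
          simp [bas, qt, Finsupp.smul_single]
          exact (Finsupp.smul_single_one _ _).symm
        rw [hb]
        simp only [map_smul]
        rw [← smul_add, ← smul_add, key σ τ t]
  -- extend to general y
  have key2 : ∀ (σ : RT V E) (y z : Span V E),
      g (a, ω) (bas σ) (g (b, μ) y z) + g (a, ω) (g (b, μ) y (bas σ)) z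
      = g (b, μ) y (g (a, ω) (bas σ) z)
        + g (b, μ) (g (a, ω) (bas σ) y) z := by
    intro σ y z
    induction y using Finsupp.induction_linear with
    | zero => simp
    | add f h hf hh =>
        simp only [map_add, LinearMap.add_apply]
        linear_combination (norm := abel) hf + hh
    | single c r =>
        obtain ⟨t, rfl⟩ := Quot.exists_rep c
        have hb : (Finsupp.single (Quot.mk Swap t) r : Span V E) = r • bas t := by
          simp [bas, qt, Finsupp.smul_single]
          exact (Finsupp.smul_single_one _ _).symm
        rw [hb]
        simp only [map_smul, LinearMap.smul_apply, map_smul]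
        rw [← smul_add, ← smul_add, key1 σ t z]
  -- extend to general x
  have key3 : ∀ (x y z : Span V E),
      g (a, ω) x (g (b, μ) y z) + g (a, ω) (g (b, μ) y x) z
      = g (b, μ) y (g (a, ω) x z) + g (b, μ) (g (a, ω) x y) z := by
    intro x y z
    induction x using Finsupp.induction_linear with
    | zero => simp
    | add f h hf hh =>
        simp only [map_add, LinearMap.add_apply]
        linear_combination (norm := abel) hf + hh
    | single c r =>
        obtain ⟨t, rfl⟩ := Quot.exists_rep c
        have hb : (Finsupp.single (Quot.mk Swap t) r : Span V E) = r • bas t := by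
          simp [bas, qt, Finsupp.smul_single]
          exact (Finsupp.smul_single_one _ _).symm
        rw [hb]
        simp only [map_smul, LinearMap.smul_apply, map_smul]
        rw [← smul_add, ← smul_add, key2 t y z]
  rw [sub_eq_sub_iff_add_eq_add]
  exact key3 x y z
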